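/- Let G : ℝⁿ → S^m be twice continuously differentiable with G(x) positive semidefinite. If nondegeneracy holds at x for (P1) and Y = √G(x) is the PSD square root of G(x), then LICQ holds at (x,Y) for (P2): the only W ∈ S^m with Y∘W = 0 and DG(x)*W = 0 is W = 0. -/

import Mathlib

open Matrix

noncomputable section

def jmul {m : ℕ} (A B : Matrix (Fin m) (Fin m) ℝ) : Matrix (Fin m) (Fin m) ℝ :=
  (1 / 2 : ℝ) • (A * B + B * A)

def minner {m : ℕ} (A B : Matrix (Fin m) (Fin m) ℝ) : ℝ :=
  (A * B).trace

def memPhi {m : ℕ} (Λ Y : Matrix (Fin m) (Fin m) ℝ) : Prop :=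
  ∀ W : Matrix (Fin m) (Fin m) ℝ, W.IsSymm → W ≠ 0 → jmul Y W = 0 →
    0 < minner (jmul W W) Λ

def pderivG {n m : ℕ} (G : (Fin n → ℝ) → Matrix (Fin m) (Fin m) ℝ)
    (x : Fin n → ℝ) (k : Fin n) : Matrix (Fin m) (Fin m) ℝ :=
  Matrix.of fun i j => fderiv ℝ (fun y => G y i j) x (Pi.single k 1)

def dirDerivG {n m : ℕ} (G : (Fin n → ℝ) → Matrix (Fin m) (Fin m) ℝ)
    (x v : Fin n → ℝ) : Matrix (Fin m) (Fin m) ℝ :=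
  ∑ k, v k • pderivG G x k

def adjDG {n m : ℕ} (G : (Fin n → ℝ) → Matrix (Fin m) (Fin m) ℝ)
    (x : Fin n → ℝ) (W : Matrix (Fin m) (Fin m) ℝ) : Fin n → ℝ :=
  fun k => minner (pderivG G x k) W

def gradf {n : ℕ} (f : (Fin n → ℝ) → ℝ) (x : Fin n → ℝ) : Fin n → ℝ :=
  fun k => fderiv ℝ f x (Pi.single k 1)

def KKT1 {n m : ℕ} (f : (Fin n → ℝ) → ℝ) (G : (Fin n → ℝ) → Matrix (Fin m) (Fin m) ℝ)
    (x : Fin n → ℝ) (Λ : Matrix (Fin m) (Fin m) ℝ) : Prop :=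
  gradf f x = adjDG G x Λ ∧ Λ.PosSemidef ∧ (G x).PosSemidef ∧ jmul Λ (G x) = 0

def KKT2 {n m : ℕ} (f : (Fin n → ℝ) → ℝ) (G : (Fin n → ℝ) → Matrix (Fin m) (Fin m) ℝ)
    (x : Fin n → ℝ) (Y Λ : Matrix (Fin m) (Fin m) ℝ) : Prop :=
  gradf f x = adjDG G x Λ ∧ jmul Λ Y = 0 ∧ G x = jmul Y Y

def hessQ {n m : ℕ} (f : (Fin n → ℝ) → ℝ) (G : (Fin n → ℝ) → Matrix (Fin m) (Fin m) ℝ)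
    (Λ : Matrix (Fin m) (Fin m) ℝ) (x v : Fin n → ℝ) : ℝ :=
  iteratedFDeriv ℝ 2 (fun y => f y - minner (G y) Λ) x ![v, v]

def SOSCNLP {n m : ℕ} (f : (Fin n → ℝ) → ℝ) (G : (Fin n → ℝ) → Matrix (Fin m) (Fin m) ℝ)
    (x : Fin n → ℝ) (Y Λ : Matrix (Fin m) (Fin m) ℝ) : Prop :=
  ∀ (v : Fin n → ℝ) (W : Matrix (Fin m) (Fin m) ℝ), W.IsSymm →
    ¬(v = 0 ∧ W = 0) → dirDerivG G x v = (2 : ℝ) • jmul Y W →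
    0 < hessQ f G Λ x v + 2 * minner (jmul W W) Λ

def SONCNLP {n m : ℕ} (f : (Fin n → ℝ) → ℝ) (G : (Fin n → ℝ) → Matrix (Fin m) (Fin m) ℝ)
    (x : Fin n → ℝ) (Y Λ : Matrix (Fin m) (Fin m) ℝ) : Prop :=
  ∀ (v : Fin n → ℝ) (W : Matrix (Fin m) (Fin m) ℝ), W.IsSymm →
    dirDerivG G x v = (2 : ℝ) • jmul Y W →
    0 ≤ hessQ f G Λ x v + 2 * minner (jmul W W) Λ

def LICQ {n m : ℕ} (G : (Fin n → ℝ) → Matrix (Fin m) (Fin m) ℝ)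
    (x : Fin n → ℝ) (Y : Matrix (Fin m) (Fin m) ℝ) : Prop :=
  ∀ W : Matrix (Fin m) (Fin m) ℝ, W.IsSymm → jmul Y W = 0 → adjDG G x W = 0 → W = 0

def Nondeg {n m : ℕ} (G : (Fin n → ℝ) → Matrix (Fin m) (Fin m) ℝ)
    (x : Fin n → ℝ) : Prop :=
  ∀ W : Matrix (Fin m) (Fin m) ℝ, W.IsSymm → G x * W = 0 → adjDG G x W = 0 → W = 0

def CritCone {n m : ℕ} (f : (Fin n → ℝ) → ℝ) (G : (Fin n → ℝ) → Matrix (Fin m) (Fin m) ℝ)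
    (x : Fin n → ℝ) : Set (Fin n → ℝ) :=
  {d | (∀ u : Fin m → ℝ, G x *ᵥ u = 0 → 0 ≤ u ⬝ᵥ (dirDerivG G x d *ᵥ u)) ∧
    gradf f x ⬝ᵥ d = 0}

def IsMPInv {m : ℕ} (A P : Matrix (Fin m) (Fin m) ℝ) : Prop :=
  A * P * A = A ∧ P * A * P = P ∧ (A * P)ᵀ = A * P ∧ (P * A)ᵀ = P * A

def Hmat {n m : ℕ} (G : (Fin n → ℝ) → Matrix (Fin m) (Fin m) ℝ)
    (x : Fin n → ℝ) (Λ P : Matrix (Fin m) (Fin m) ℝ) : Matrix (Fin n) (Fin n) ℝ :=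
  Matrix.of fun i j => 2 * (pderivG G x i * P * pderivG G x j * Λ).trace

def Matrix.PosSemidef.sqrt {m : ℕ} {A : Matrix (Fin m) (Fin m) ℝ} (hA : A.PosSemidef) :
    Matrix (Fin m) (Fin m) ℝ :=
  hA.1.eigenvectorUnitary.1 * diagonal ((↑) ∘ (√·) ∘ hA.1.eigenvalues) *
  (star hA.1.eigenvectorUnitary : Matrix (Fin m) (Fin m) ℝ)

lemma Matrix.PosSemidef.posSemidef_sqrt {m : ℕ} {A : Matrix (Fin m) (Fin m) ℝ}
    (hA : A.PosSemidef) : hA.sqrt.PosSemidef := by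
  unfold Matrix.PosSemidef.sqrt
  have hd : (diagonal ((↑) ∘ (√·) ∘ hA.1.eigenvalues) : Matrix (Fin m) (Fin m) ℝ).PosSemidef := by
    rw [Matrix.posSemidef_diagonal_iff]
    intro i
    simp [Real.sqrt_nonneg]
  have := hd.mul_mul_conjTranspose_same (hA.1.eigenvectorUnitary : Matrix (Fin m) (Fin m) ℝ)
  simpa [Unitary.coe_star, Matrix.star_eq_conjTranspose] using this

lemma Matrix.PosSemidef.sqrt_mul_self {m : ℕ} {A : Matrix (Fin m) (Fin m) ℝ}
    (hA : A.PosSemidef) : hA.sqrt * hA.sqrt = A := by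
  unfold Matrix.PosSemidef.sqrt
  set U : Matrix (Fin m) (Fin m) ℝ := (hA.1.eigenvectorUnitary : Matrix (Fin m) (Fin m) ℝ) with hU
  have hUs : (star hA.1.eigenvectorUnitary : Matrix (Fin m) (Fin m) ℝ) * U = 1 :=
    Unitary.coe_star_mul_self hA.1.eigenvectorUnitary
  have hsp : A = U * diagonal (RCLike.ofReal ∘ hA.1.eigenvalues) *
      (star hA.1.eigenvectorUnitary : Matrix (Fin m) (Fin m) ℝ) := by
    have := hA.1.spectral_theorem
    simpa [Unitary.conjStarAlgAut_apply, hU] using this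
  have hdd : (diagonal ((↑) ∘ (√·) ∘ hA.1.eigenvalues) : Matrix (Fin m) (Fin m) ℝ) *
      diagonal ((↑) ∘ (√·) ∘ hA.1.eigenvalues) = diagonal (RCLike.ofReal ∘ hA.1.eigenvalues) := by
    rw [diagonal_mul_diagonal]
    congr 1
    funext i
    simp [Real.mul_self_sqrt (hA.eigenvalues_nonneg i)]
  conv_rhs => rw [hsp, ← hdd]
  calc _ = U * diagonal ((↑) ∘ (√·) ∘ hA.1.eigenvalues) *
        ((star hA.1.eigenvectorUnitary : Matrix (Fin m) (Fin m) ℝ) * U) *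
        diagonal ((↑) ∘ (√·) ∘ hA.1.eigenvalues) *
        (star hA.1.eigenvectorUnitary : Matrix (Fin m) (Fin m) ℝ) := by
          simp only [Matrix.mul_assoc]; rfl
    _ = _ := by rw [hUs, Matrix.mul_one]; simp only [Matrix.mul_assoc]

lemma psd_anticomm_zero {m : ℕ} {Y W : Matrix (Fin m) (Fin m) ℝ}
    (hY : Y.PosSemidef) (h : Y * W + W * Y = 0) : Y * W = 0 := by
  classical
  have hH := hY.1
  set U : Matrix (Fin m) (Fin m) ℝ := (hH.eigenvectorUnitary : Matrix (Fin m) (Fin m) ℝ) with hU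
  have hUs : star U * U = 1 := Unitary.coe_star_mul_self hH.eigenvectorUnitary
  have hsU : U * star U = 1 := Unitary.coe_mul_star_self hH.eigenvectorUnitary
  have cancel1 : ∀ X : Matrix (Fin m) (Fin m) ℝ, U * (star U * X) = X := fun X => by
    rw [← Matrix.mul_assoc, hsU, one_mul]
  have cancel2 : ∀ X : Matrix (Fin m) (Fin m) ℝ, star U * (U * X) = X := fun X => by
    rw [← Matrix.mul_assoc, hUs, one_mul]
  set D : Matrix (Fin m) (Fin m) ℝ := diagonal (RCLike.ofReal ∘ hH.eigenvalues) with hD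
  have hdiag : star U * Y * U = D := by
    have := hH.conjStarAlgAut_star_eigenvectorUnitary
    simpa [Unitary.conjStarAlgAut_apply, Unitary.coe_star, hU, hD] using this
  set V : Matrix (Fin m) (Fin m) ℝ := star U * W * U with hV
  have hDV : D * V + V * D = 0 := by
    have h2 := congrArg (fun M => star U * M * U) h
    simp only [Matrix.mul_zero, Matrix.zero_mul, Matrix.mul_add, Matrix.add_mul] at h2
    rw [← hdiag, hV]
    rw [show star U * Y * U * (star U * W * U) = star U * (Y * W) * U by
      simp only [Matrix.mul_assoc, cancel1, cancel2]]
    rw [show star U * W * U * (star U * Y * U) = star U * (W * Y) * U by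
      simp only [Matrix.mul_assoc, cancel1, cancel2]]
    exact h2
  have hDVzero : D * V = 0 := by
    ext i j
    have hent : hH.eigenvalues i * V i j + V i j * hH.eigenvalues j = 0 := by
      have := congrFun (congrFun hDV i) j
      simpa [hD, diagonal_mul, mul_diagonal] using this
    simp only [hD, Matrix.zero_apply, diagonal_mul, Function.comp_apply, RCLike.ofReal_real_eq_id,
      id_eq]
    rcases eq_or_ne (hH.eigenvalues i) 0 with h0 | h0
    · simp [h0]
    · have hi : 0 < hH.eigenvalues i := lt_of_le_of_ne (hY.eigenvalues_nonneg i) (Ne.symm h0)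
      have hj : 0 ≤ hH.eigenvalues j := hY.eigenvalues_nonneg j
      have hmul : V i j * (hH.eigenvalues i + hH.eigenvalues j) = 0 := by linarith [hent]
      have hV0 : V i j = 0 := by
        rcases mul_eq_zero.mp hmul with h' | h'
        · exact h'
        · linarith
      simp [hV0]
  have hYU : Y = U * D * star U := by
    have := hH.spectral_theorem
    simpa [Unitary.conjStarAlgAut_apply, Unitary.coe_star, hU, hD] using this
  have hWU : W = U * V * star U := by
    rw [hV]
    simp only [Matrix.mul_assoc, cancel1, cancel2]
    rw [hsU, Matrix.mul_one]
  rw [hYU, hWU, show U * D * star U * (U * V * star U) = U * (D * V) * star U by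
    simp only [Matrix.mul_assoc, cancel1, cancel2], hDVzero, Matrix.mul_zero, Matrix.zero_mul]

theorem stmt13 {n m : ℕ} (G : (Fin n → ℝ) → Matrix (Fin m) (Fin m) ℝ)
    (hG : ∀ i j, ContDiff ℝ 2 fun y => G y i j) (x : Fin n → ℝ) (hGx : (G x).PosSemidef)
    (hnd : Nondeg G x) :
    LICQ G x hGx.sqrt := by
  intro W hW hjm hadj
  have hsum : hGx.sqrt * W + W * hGx.sqrt = 0 := by
    have := hjm
    unfold jmul at this
    rcases smul_eq_zero.mp this with h' | h'
    · norm_num at h'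
    · exact h'
  have hYW : hGx.sqrt * W = 0 := psd_anticomm_zero hGx.posSemidef_sqrt hsum
  have hGW : G x * W = 0 := by
    rw [← hGx.sqrt_mul_self, Matrix.mul_assoc, hYW, Matrix.mul_zero]
  exact hnd W hW hGW hadj
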